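/- For x₁ = (3 + √(3(−3+2√3)))/6, the value d₁(x₁) of the function d₁(x) = x²/(x²+(1−x)²) − x²(1+2(1−x)) equals 1/√(135 + 78√3). -/

import Mathlib

theorem stmt_8 (x₁ : ℝ) (hx₁ : x₁ = (3 + Real.sqrt (3 * (-3 + 2 * Real.sqrt 3))) / 6) :
    x₁ ^ 2 / (x₁ ^ 2 + (1 - x₁) ^ 2) - x₁ ^ 2 * (1 + 2 * (1 - x₁)) =
      1 / Real.sqrt (135 + 78 * Real.sqrt 3) := by
  set s : ℝ := Real.sqrt 3 with hsdef
  have hs0 : 0 ≤ s := Real.sqrt_nonneg 3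
  have hs : s ^ 2 = 3 := Real.sq_sqrt (by norm_num)
  have hs32 : (3:ℝ)/2 < s := by nlinarith
  set t : ℝ := Real.sqrt (3 * (-3 + 2 * s)) with htdef
  have ht0 : 0 ≤ t := Real.sqrt_nonneg _
  have ht : t ^ 2 = 3 * (-3 + 2 * s) := Real.sq_sqrt (by nlinarith)
  have htpos : 0 < t := by
    rcases ht0.lt_or_eq with h | h
    · exact h
    · exfalso; nlinarith [ht]
  set u : ℝ := Real.sqrt (135 + 78 * s) with hudef
  have hu0 : 0 ≤ u := Real.sqrt_nonneg _
  have hu : u ^ 2 = 135 + 78 * s := Real.sq_sqrt (by nlinarith)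
  have hupos : 0 < u := by
    rcases hu0.lt_or_eq with h | h
    · exact h
    · exfalso; nlinarith [hu]
  have h2s : (0:ℝ) < 2 - s := by nlinarith
  have hspos : (0:ℝ) < s := by linarith
  -- key squared identity
  have hk : t * (2 - s) * u = 3 * s := by
    have h1 : (t * (2 - s) * u) ^ 2 = (3 * s) ^ 2 := by
      linear_combination (1620 - 1764 * s + 468 * s ^ 2) * hs +
        (540 - 228 * s - 177 * s ^ 2 + 78 * s ^ 3) * ht +
        (4 * t ^ 2 - 4 * s * t ^ 2 + s ^ 2 * t ^ 2) * hu
    nlinarith [h1, mul_pos (mul_pos htpos h2s) hupos, mul_pos (by norm_num : (0:ℝ) < 3) hspos]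
  have hden : x₁ ^ 2 + (1 - x₁) ^ 2 = s / 3 := by
    rw [hx₁]; linear_combination (1/18) * ht
  have hL : x₁ ^ 2 / (x₁ ^ 2 + (1 - x₁) ^ 2) - x₁ ^ 2 * (1 + 2 * (1 - x₁))
      = t * (2 - s) / (3 * s) := by
    rw [hden, hx₁]
    field_simp
    ring_nf
    linear_combination (36 * t) * hs + (54 + 6 * s * t) * ht
  rw [hL]
  rw [div_eq_div_iff (by positivity) (ne_of_gt hupos)]
  linarith [hk]
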